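/- Let G(T) be the threshold graph on {1,…,n} with construction sequence T and Laplacian matrix L. Let V be the n×n real matrix whose first column is the all-ones vector 1_n and whose i-th column, for 2 ≤ i ≤ n, is C(i−1). Then V is invertible and L·V = V·D, where D is the diagonal matrix with D_{11} = 0 and D_{ii} = d(i) + [T(i) = 1] for 2 ≤ i ≤ n; that is, the columns of V form a basis of ℝ^n consisting of eigenvectors of L (a modal matrix of G(T)). -/

import Mathlib

open Finset Matrix Polynomial

/-- The threshold graph on `Fin n` (vertex `i` of the paper corresponds to `⟨i-1, _⟩ : Fin n`)
with construction sequence `T` : two distinct vertices are adjacent iff the later one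
(in the construction order) was added by a join operation. -/
def thresholdGraph (n : ℕ) (T : Fin n → Bool) : SimpleGraph (Fin n) where
  Adj i j := i ≠ j ∧ T (max i j) = true
  symm := by
    constructor
    intro i j h
    exact ⟨h.1.symm, by rw [max_comm]; exact h.2⟩
  loopless := by
    constructor
    intro i h
    exact h.1 rfl

instance thresholdGraph.instDecidableRelAdj (n : ℕ) (T : Fin n → Bool) :
    DecidableRel (thresholdGraph n T).Adj :=
  fun i j => decidable_of_iff (i ≠ j ∧ T (max i j) = true) Iff.rfl

/-- `Cvec n k` is the vector `C(k) ∈ ℝ^n` of the paper: its first `k` entries equal `1`, its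
`(k+1)`-st entry equals `−k`, and its remaining entries equal `0` (0-indexed over `Fin n`). -/
def Cvec (n k : ℕ) : Fin n → ℝ := fun j =>
  if (j : ℕ) < k then 1 else if (j : ℕ) = k then -(k : ℝ) else 0

private lemma sum_split {n : ℕ} (c : Fin n) (f : Fin n → ℝ) :
    ∑ u, f u = (∑ u ∈ Finset.Iio c, f u) + f c + ∑ u ∈ Finset.Ioi c, f u := by
  have h1 : (Finset.Iio c) ∪ (Finset.Ici c) = Finset.univ := by
    ext u; simp [lt_or_ge]
  have h2 : Disjoint (Finset.Iio c) (Finset.Ici c) := by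
    simp [Finset.disjoint_left]
  rw [← h1, Finset.sum_union h2, Finset.Ici_eq_cons_Ioi, Finset.sum_cons, ← add_assoc]

private lemma degree_eq_sum {n : ℕ} (G : SimpleGraph (Fin n)) [DecidableRel G.Adj] (r : Fin n) :
    (G.degree r : ℝ) = ∑ u, if G.Adj r u then (1:ℝ) else 0 := by
  rw [Finset.sum_boole]
  congr 1
  rw [SimpleGraph.degree, SimpleGraph.neighborFinset_eq_filter]

private lemma tg_adj_lt {n : ℕ} {T : Fin n → Bool} {r s : Fin n} (h : r < s) :
    (thresholdGraph n T).Adj r s ↔ T s = true := by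
  simp [thresholdGraph, h.ne, max_eq_right h.le]

private lemma tg_adj_gt {n : ℕ} {T : Fin n → Bool} {r s : Fin n} (h : s < r) :
    (thresholdGraph n T).Adj r s ↔ T r = true := by
  simp [thresholdGraph, h.ne', max_eq_left h.le]

private lemma sum_Cvec {n : ℕ} (c : Fin n) : ∑ r, Cvec n (c : ℕ) r = 0 := by
  rw [sum_split c]
  have h1 : ∑ u ∈ Finset.Iio c, Cvec n (c:ℕ) u = ∑ u ∈ Finset.Iio c, (1:ℝ) := by
    refine Finset.sum_congr rfl fun u hu => ?_
    rw [Finset.mem_Iio] at hu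
    simp [Cvec, hu]
  have h2 : ∑ u ∈ Finset.Ioi c, Cvec n (c:ℕ) u = 0 := by
    refine Finset.sum_eq_zero fun u hu => ?_
    rw [Finset.mem_Ioi] at hu
    have h3 : (c:ℕ) < (u:ℕ) := hu
    simp only [Cvec]
    rw [if_neg (by omega), if_neg (by omega)]
  rw [h1, h2, Finset.sum_const, Fin.card_Iio]
  simp [Cvec]


private lemma col_orth {n : ℕ} (i j : Fin n) (hij : i < j) :
    ∑ r, (if (i:ℕ) = 0 then (1:ℝ) else Cvec n (i:ℕ) r) *
      (if (j:ℕ) = 0 then (1:ℝ) else Cvec n (j:ℕ) r) = 0 := by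
  have hlt : (i:ℕ) < (j:ℕ) := hij
  have hj : (j:ℕ) ≠ 0 := by omega
  simp only [if_neg hj]
  by_cases hi : (i:ℕ) = 0
  · simp only [if_pos hi, one_mul]
    exact sum_Cvec j
  · simp only [if_neg hi]
    have hpt : ∀ r : Fin n, Cvec n (i:ℕ) r * Cvec n (j:ℕ) r = Cvec n (i:ℕ) r := by
      intro r
      by_cases h1 : (r:ℕ) < (i:ℕ)
      · have h2 : (r:ℕ) < (j:ℕ) := by omega
        simp [Cvec, h1, h2]
      · by_cases h2 : (r:ℕ) = (i:ℕ)
        · have h3 : (r:ℕ) < (j:ℕ) := by omega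
          have e1 : Cvec n (i:ℕ) r = -((i:ℕ):ℝ) := by
            simp only [Cvec]; rw [if_neg h1, if_pos h2]
          have e2 : Cvec n (j:ℕ) r = 1 := by
            simp only [Cvec]; rw [if_pos h3]
          rw [e1, e2, mul_one]
        · simp [Cvec, h1, h2]
    simp only [hpt]
    exact sum_Cvec i

/-- the matrix `V` whose first column is the all-ones vector and whose `i`-th
column (for `2 ≤ i ≤ n`) is `C(i−1)` is an invertible matrix satisfying `L·V = V·D`, where
`D` is diagonal with `D₁₁ = 0` and `D_{ii} = d(i) + [T(i) = 1]`; i.e. the columns of `V` form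
an eigenvector basis of `ℝ^n` (a modal matrix of `G(T)`). -/
theorem modal_matrix_thresholdGraph (n : ℕ) (T : Fin n → Bool) (hn : 0 < n)
    (hT1 : T ⟨0, hn⟩ = false) :
    IsUnit (Matrix.of fun r c : Fin n => if (c : ℕ) = 0 then (1 : ℝ) else Cvec n (c : ℕ) r) ∧
      (thresholdGraph n T).lapMatrix ℝ *
          (Matrix.of fun r c : Fin n => if (c : ℕ) = 0 then (1 : ℝ) else Cvec n (c : ℕ) r) =
        (Matrix.of fun r c : Fin n => if (c : ℕ) = 0 then (1 : ℝ) else Cvec n (c : ℕ) r) *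
          Matrix.diagonal (fun i : Fin n =>
            if (i : ℕ) = 0 then 0
            else ((thresholdGraph n T).degree i : ℝ) + (if T i = true then 1 else 0)) := by
  set V : Matrix (Fin n) (Fin n) ℝ :=
    Matrix.of fun r c : Fin n => if (c : ℕ) = 0 then (1 : ℝ) else Cvec n (c : ℕ) r with hV
  constructor
  · -- invertibility via orthogonal columns
    have hVtV : Vᵀ * V = Matrix.diagonal
        (fun i : Fin n => if (i:ℕ) = 0 then (n:ℝ) else (i:ℕ) + ((i:ℕ):ℝ)^2) := by
      ext i j
      rw [Matrix.mul_apply]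
      simp only [hV, Matrix.transpose_apply, Matrix.of_apply]
      by_cases hij : i = j
      · subst hij
        rw [Matrix.diagonal_apply_eq]
        by_cases hi : (i:ℕ) = 0
        · simp [hi]
        · rw [if_neg hi]
          simp only [if_neg hi]
          rw [sum_split i]
          have h1 : ∑ u ∈ Finset.Iio i, Cvec n (i:ℕ) u * Cvec n (i:ℕ) u
              = ∑ u ∈ Finset.Iio i, (1:ℝ) := by
            refine Finset.sum_congr rfl fun u hu => ?_
            rw [Finset.mem_Iio] at hu
            simp [Cvec, (Fin.lt_def.mp hu)]
          have h2 : ∑ u ∈ Finset.Ioi i, Cvec n (i:ℕ) u * Cvec n (i:ℕ) u = 0 := by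
            refine Finset.sum_eq_zero fun u hu => ?_
            rw [Finset.mem_Ioi] at hu
            have h3 : (i:ℕ) < (u:ℕ) := hu
            simp only [Cvec]
            rw [if_neg (by omega), if_neg (by omega), zero_mul]
          have h3 : Cvec n (i:ℕ) i * Cvec n (i:ℕ) i = ((i:ℕ):ℝ)^2 := by
            simp [Cvec]; ring
          rw [h1, h2, h3, Finset.sum_const, Fin.card_Iio, nsmul_eq_mul, mul_one, add_zero]
      · rw [Matrix.diagonal_apply_ne _ hij]
        rcases lt_or_gt_of_ne hij with h | h
        · exact col_orth i j h
        · have h2 : ∀ r : Fin n,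
              (if (i:ℕ) = 0 then (1:ℝ) else Cvec n (i:ℕ) r) *
                (if (j:ℕ) = 0 then (1:ℝ) else Cvec n (j:ℕ) r)
              = (if (j:ℕ) = 0 then (1:ℝ) else Cvec n (j:ℕ) r) *
                (if (i:ℕ) = 0 then (1:ℝ) else Cvec n (i:ℕ) r) := fun r => mul_comm _ _
          simp only [h2]
          exact col_orth j i h
    have hdet : V.det * V.det
        = ∏ i : Fin n, (if (i:ℕ) = 0 then (n:ℝ) else (i:ℕ) + ((i:ℕ):ℝ)^2) := by
      have h := congrArg Matrix.det hVtV
      rwa [Matrix.det_mul, Matrix.det_transpose, Matrix.det_diagonal] at h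
    have hprod : (∏ i : Fin n, (if (i:ℕ) = 0 then (n:ℝ) else (i:ℕ) + ((i:ℕ):ℝ)^2)) ≠ 0 := by
      refine Finset.prod_ne_zero_iff.mpr fun i _ => ?_
      by_cases hi : (i:ℕ) = 0
      · rw [if_pos hi]
        exact Nat.cast_ne_zero.mpr hn.ne'
      · rw [if_neg hi]
        have h1 : (1:ℝ) ≤ ((i:ℕ):ℝ) := by
          exact_mod_cast Nat.one_le_iff_ne_zero.mpr hi
        nlinarith
    have hne : V.det ≠ 0 := by
      intro h
      rw [h, mul_zero] at hdet
      exact hprod hdet.symm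
    exact (Matrix.isUnit_iff_isUnit_det V).mpr (isUnit_iff_ne_zero.mpr hne)
  · -- the eigenvector equation
    rw [SimpleGraph.lapMatrix, sub_mul]
    ext r c
    rw [Matrix.sub_apply, SimpleGraph.degMatrix, Matrix.diagonal_mul, Matrix.mul_diagonal,
      Matrix.mul_apply]
    simp only [SimpleGraph.adjMatrix_apply]
    by_cases hc : (c:ℕ) = 0
    · simp only [hV, Matrix.of_apply, if_pos hc, mul_one, one_mul, mul_zero]
      rw [← degree_eq_sum, sub_self]
    · simp only [hV, Matrix.of_apply, if_neg hc]
      have hAsum : ∑ s, (if (thresholdGraph n T).Adj r s then (1:ℝ) else 0) * Cvec n (c:ℕ) s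
          = (∑ s ∈ Finset.Iio c, (if (thresholdGraph n T).Adj r s then (1:ℝ) else 0))
            + (if (thresholdGraph n T).Adj r c then (1:ℝ) else 0) * (-((c:ℕ):ℝ)) := by
        rw [sum_split c]
        have e1 : ∑ s ∈ Finset.Iio c,
            (if (thresholdGraph n T).Adj r s then (1:ℝ) else 0) * Cvec n (c:ℕ) s
            = ∑ s ∈ Finset.Iio c, (if (thresholdGraph n T).Adj r s then (1:ℝ) else 0) := by
          refine Finset.sum_congr rfl fun s hs => ?_
          rw [Finset.mem_Iio] at hs
          simp [Cvec, (Fin.lt_def.mp hs)]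
        have e2 : ∑ s ∈ Finset.Ioi c,
            (if (thresholdGraph n T).Adj r s then (1:ℝ) else 0) * Cvec n (c:ℕ) s = 0 := by
          refine Finset.sum_eq_zero fun s hs => ?_
          rw [Finset.mem_Ioi] at hs
          have h3 : (c:ℕ) < (s:ℕ) := hs
          have h4 : Cvec n (c:ℕ) s = 0 := by
            simp only [Cvec]
            rw [if_neg (by omega), if_neg (by omega)]
          rw [h4, mul_zero]
        have e3 : Cvec n (c:ℕ) c = -((c:ℕ):ℝ) := by simp [Cvec]
        rw [e1, e2, e3, add_zero]
      rw [hAsum]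
      have hIioc : ∑ s ∈ Finset.Iio c, (if (thresholdGraph n T).Adj c s then (1:ℝ) else 0)
          = ((c:ℕ):ℝ) * (if T c = true then (1:ℝ) else 0) := by
        have : ∀ s ∈ Finset.Iio c, (if (thresholdGraph n T).Adj c s then (1:ℝ) else 0)
            = (if T c = true then (1:ℝ) else 0) := by
          intro s hs
          rw [Finset.mem_Iio] at hs
          simp only [tg_adj_gt hs]
        rw [Finset.sum_congr rfl this, Finset.sum_const, Fin.card_Iio, nsmul_eq_mul]
      rcases lt_trichotomy r c with h | h | h
      · -- r < c
        have hCr : Cvec n (c:ℕ) r = 1 := by simp [Cvec, (Fin.lt_def.mp h)]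
        have hArc : (if (thresholdGraph n T).Adj r c then (1:ℝ) else 0)
            = (if T c = true then (1:ℝ) else 0) := by simp only [tg_adj_lt h]
        have hdr : ((thresholdGraph n T).degree r : ℝ)
            = (∑ s ∈ Finset.Iio c, (if (thresholdGraph n T).Adj r s then (1:ℝ) else 0))
              + (if (thresholdGraph n T).Adj r c then (1:ℝ) else 0)
              + ∑ s ∈ Finset.Ioi c, (if (thresholdGraph n T).Adj r s then (1:ℝ) else 0) := by
          rw [degree_eq_sum, sum_split c]
        have hdc : ((thresholdGraph n T).degree c : ℝ)
            = ((c:ℕ):ℝ) * (if T c = true then (1:ℝ) else 0)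
              + ∑ s ∈ Finset.Ioi c, (if (thresholdGraph n T).Adj r s then (1:ℝ) else 0) := by
          rw [degree_eq_sum, sum_split c, hIioc]
          have hcc : (if (thresholdGraph n T).Adj c c then (1:ℝ) else 0) = 0 :=
            if_neg ((thresholdGraph n T).irrefl)
          have hIoi : ∑ s ∈ Finset.Ioi c, (if (thresholdGraph n T).Adj c s then (1:ℝ) else 0)
              = ∑ s ∈ Finset.Ioi c, (if (thresholdGraph n T).Adj r s then (1:ℝ) else 0) := by
            refine Finset.sum_congr rfl fun s hs => ?_
            rw [Finset.mem_Ioi] at hs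
            simp only [tg_adj_lt hs, tg_adj_lt (h.trans hs)]
          rw [hcc, hIoi, add_zero]
        rw [hCr, hdr, hdc, hArc]
        ring
      · -- r = c
        subst h
        have hCr : Cvec n (r:ℕ) r = -((r:ℕ):ℝ) := by simp [Cvec]
        have hcc : (if (thresholdGraph n T).Adj r r then (1:ℝ) else 0) = 0 :=
          if_neg ((thresholdGraph n T).irrefl)
        rw [hCr, hcc, hIioc]
        ring
      · -- c < r
        have h1 : (c:ℕ) < (r:ℕ) := h
        have hCr : Cvec n (c:ℕ) r = 0 := by
          simp only [Cvec]
          rw [if_neg (by omega), if_neg (by omega)]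
        have hArc : (if (thresholdGraph n T).Adj r c then (1:ℝ) else 0)
            = (if T r = true then (1:ℝ) else 0) := by simp only [tg_adj_gt h]
        have hIior : ∑ s ∈ Finset.Iio c, (if (thresholdGraph n T).Adj r s then (1:ℝ) else 0)
            = ((c:ℕ):ℝ) * (if T r = true then (1:ℝ) else 0) := by
          have : ∀ s ∈ Finset.Iio c, (if (thresholdGraph n T).Adj r s then (1:ℝ) else 0)
              = (if T r = true then (1:ℝ) else 0) := by
            intro s hs
            rw [Finset.mem_Iio] at hs
            simp only [tg_adj_gt (hs.trans h)]
          rw [Finset.sum_congr rfl this, Finset.sum_const, Fin.card_Iio, nsmul_eq_mul]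
        rw [hCr, hArc, hIior]
        ring
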